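/- Let d ≥ k > 0 be integers, K a finite set of cardinality k, μ : K → ℕ, and set μ₀ = (∑_{j∈K} μ_j) + d - 1. In the field of rational functions ℚ(L), define p(m) = (L^{m+1} - 1)/(L - 1), and define h_I = (L-1)^{k-|I|} L^{d-k}/(L-1) for subsets I ⊊ K, and h_K = (L^{d-k} - 1)/(L-1). Then ∑_{I ⊆ K} h_I / (p(μ₀) · ∏_{i∈I} p(μ_i)) = 1 / ∏_{j∈K} p(μ_j). -/

import Mathlib

open RatFunc

theorem simplexcor_ratfunc {α : Type*} [DecidableEq α]
    (d k : ℕ) (hk : 0 < k) (hdk : k ≤ d) (K : Finset α) (hK : K.card = k)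
    (μ : α → ℕ) (μ₀ : ℕ) (hμ₀ : μ₀ = (∑ j ∈ K, μ j) + d - 1)
    (p : ℕ → RatFunc ℚ) (hp : ∀ m, p m = ((X : RatFunc ℚ) ^ (m + 1) - 1) / (X - 1))
    (h : Finset α → RatFunc ℚ)
    (hh : ∀ I ∈ K.powerset, h I =
      if I = K then ((X : RatFunc ℚ) ^ (d - k) - 1) / (X - 1)
      else ((X : RatFunc ℚ) - 1) ^ (k - I.card) * X ^ (d - k) / (X - 1)) :
    ∑ I ∈ K.powerset, h I / (p μ₀ * ∏ i ∈ I, p (μ i))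
      = 1 / ∏ j ∈ K, p (μ j) := by
  have hXn : ∀ n : ℕ, 0 < n → (X : RatFunc ℚ) ^ n - 1 ≠ 0 := by
    intro n hn
    have h1 : (X : RatFunc ℚ) ^ n - 1 =
        algebraMap (Polynomial ℚ) (RatFunc ℚ) (Polynomial.X ^ n - 1) := by
      simp [map_sub, map_pow, RatFunc.algebraMap_X]
    rw [h1]
    apply RatFunc.algebraMap_ne_zero
    intro hcon
    have := congrArg (Polynomial.eval 0) hcon
    simp [zero_pow hn.ne'] at this
  have hX1 : (X : RatFunc ℚ) - 1 ≠ 0 := by simpa using hXn 1 one_pos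
  have hpne : ∀ m, p m ≠ 0 := fun m => by
    rw [hp]; exact div_ne_zero (hXn (m + 1) (Nat.succ_pos m)) hX1
  have hmul : ∀ m, ((X : RatFunc ℚ) - 1) * p m = X ^ (m + 1) - 1 := fun m => by
    rw [hp, mul_comm, div_mul_cancel₀ _ hX1]
  -- Key identity
  have keyA : ∑ I ∈ K.powerset, h I * ∏ j ∈ K \ I, p (μ j) = p μ₀ := by
    apply mul_left_cancel₀ hX1
    rw [hmul, Finset.mul_sum]
    have hstep : ∀ I ∈ K.powerset,
        ((X : RatFunc ℚ) - 1) * (h I * ∏ j ∈ K \ I, p (μ j))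
          = (X : RatFunc ℚ) ^ (d - k) * ∏ j ∈ K \ I, ((X : RatFunc ℚ) ^ (μ j + 1) - 1)
            - (if I = K then 1 else 0) := by
      intro I hI
      have hIK : I ⊆ K := Finset.mem_powerset.mp hI
      rw [hh I hI]
      by_cases hIK' : I = K
      · subst hIK'
        simp only [if_pos rfl, if_true, Finset.sdiff_self, Finset.prod_empty, mul_one]
        field_simp
      · simp only [if_neg hIK', sub_zero]
        have hcard : (K \ I).card = k - I.card := by
          rw [Finset.card_sdiff_of_subset hIK, hK]
        have hprod : ∏ j ∈ K \ I, ((X : RatFunc ℚ) ^ (μ j + 1) - 1)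
            = ((X : RatFunc ℚ) - 1) ^ (k - I.card) * ∏ j ∈ K \ I, p (μ j) := by
          rw [← hcard, ← Finset.prod_const, ← Finset.prod_mul_distrib]
          exact Finset.prod_congr rfl fun j _ => (hmul (μ j)).symm
        rw [hprod]
        field_simp
    rw [Finset.sum_congr rfl hstep, Finset.sum_sub_distrib, ← Finset.mul_sum]
    have hsum : ∑ I ∈ K.powerset, ∏ j ∈ K \ I, ((X : RatFunc ℚ) ^ (μ j + 1) - 1)
        = ∏ j ∈ K, (X : RatFunc ℚ) ^ (μ j + 1) := by
      have hpa := Finset.prod_add (fun _ : α => (1 : RatFunc ℚ))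
        (fun j => (X : RatFunc ℚ) ^ (μ j + 1) - 1) K
      simp only [Finset.prod_const_one, one_mul, add_sub_cancel] at hpa
      exact hpa.symm
    have hif : ∑ I ∈ K.powerset, (if I = K then (1 : RatFunc ℚ) else 0) = 1 := by
      rw [Finset.sum_ite_eq' K.powerset K (fun _ => (1 : RatFunc ℚ))]
      simp
    rw [hsum, hif, Finset.prod_pow_eq_pow_sum]
    rw [← pow_add]
    have hd1 : 1 ≤ d := le_trans hk hdk
    have hexp : d - k + ∑ j ∈ K, (μ j + 1) = μ₀ + 1 := by
      rw [Finset.sum_add_distrib, Finset.sum_const, hK, smul_eq_mul, mul_one, hμ₀]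
      omega
    rw [hexp]
  -- Rewrite each term over a common denominator
  have hKne : (∏ j ∈ K, p (μ j)) ≠ 0 := Finset.prod_ne_zero_iff.mpr fun j _ => hpne _
  have hrw : ∀ I ∈ K.powerset,
      h I / (p μ₀ * ∏ i ∈ I, p (μ i))
        = (h I * ∏ j ∈ K \ I, p (μ j)) / (p μ₀ * ∏ j ∈ K, p (μ j)) := by
    intro I hI
    have hIK : I ⊆ K := Finset.mem_powerset.mp hI
    have hIne : (∏ i ∈ I, p (μ i)) ≠ 0 := Finset.prod_ne_zero_iff.mpr fun j _ => hpne _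
    rw [div_eq_div_iff (mul_ne_zero (hpne _) hIne) (mul_ne_zero (hpne _) hKne),
      ← Finset.prod_sdiff hIK]
    ring
  rw [Finset.sum_congr rfl hrw, ← Finset.sum_div, keyA, ← div_div, div_self (hpne μ₀)]
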